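/- Let n ≥ 2 and let A be a diagonal n×n matrix with diagonal entries β₁₁,…,βₙₙ ∈ (0,1). Then, in ℝⁿ with the sup metric, there exist nonempty compact sets C₁, C₂ ⊆ B[0,1] such that neither of C₁, C₂ is contained in a single connected component of the complement of the other, τ_A(C₁) + τ_A(C₂) > 0, and C₁ ∩ C₂ = ∅. -/

import Mathlib

open Metric Set Topology Filter
open scoped ENNReal Classical

noncomputable section

/-- The affine box `A^s(B[0,1]) + z`, where `A` is the diagonal matrix with
diagonal entries `β j`, so `A^s(B[0,1]) + z = {x : |x j - z j| ≤ (β j)^s for all j}`. -/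
def affBox {n : ℕ} (β : Fin n → ℝ) (s : ℝ) (z : Fin n → ℝ) : Set (Fin n → ℝ) :=
  {x | ∀ j, |x j - z j| ≤ (β j) ^ s}

/-- The size `S_A(F)` of `F` with respect to the diagonal matrix with entries `β`. -/
def sizeWrt {n : ℕ} (β : Fin n → ℝ) (F : Set (Fin n → ℝ)) : ℝ :=
  sInf {t | 0 < t ∧ ∃ z, F ⊆ affBox β (1 / t) z}

/-- `G` is a gap (a connected component of the complement) of `C`. -/
def IsGap {n : ℕ} (C G : Set (Fin n → ℝ)) : Prop :=
  ∃ x ∈ Cᶜ, G = connectedComponentIn Cᶜ x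

/-- `G` is a bounded gap of `C`. -/
def IsBoundedGap {n : ℕ} (C G : Set (Fin n → ℝ)) : Prop :=
  IsGap C G ∧ Bornology.IsBounded G

/-- The unbounded gap `E` of `C`: the union of the unbounded connected
components of the complement of `C`. -/
def unboundedGap {n : ℕ} (C : Set (Fin n → ℝ)) : Set (Fin n → ℝ) :=
  {x | x ∈ Cᶜ ∧ ¬ Bornology.IsBounded (connectedComponentIn Cᶜ x)}

/-- An enumeration `(G_k)_{k ∈ J}` of the bounded gaps of `C`, in non-increasing
order of size with respect to `β`. -/
structure GapEnum {n : ℕ} (β : Fin n → ℝ) (C : Set (Fin n → ℝ)) where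
  J : Set ℕ
  G : ℕ → Set (Fin n → ℝ)
  downward : ∀ k l : ℕ, k ≤ l → l ∈ J → k ∈ J
  isGap : ∀ k ∈ J, IsBoundedGap C (G k)
  inj : ∀ k ∈ J, ∀ l ∈ J, G k = G l → k = l
  surj : ∀ G', IsBoundedGap C G' → ∃ k ∈ J, G k = G'
  anti : ∀ k ∈ J, ∀ l ∈ J, k ≤ l → sizeWrt β (G l) ≤ sizeWrt β (G k)

/-- The gap distance `GD_A(m, C)` with respect to the enumeration `e`. -/
def gapDist {n : ℕ} (β : Fin n → ℝ) (C : Set (Fin n → ℝ)) (e : GapEnum β C) (m : ℕ) : ℝ :=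
  sInf {t | 0 < t ∧ ∃ z, (affBox β (1 / t) z ∩ e.G m).Nonempty ∧
    (affBox β (1 / t) z ∩ ((⋃ i ∈ e.J ∩ Iio m, e.G i) ∪ unboundedGap C)).Nonempty}

/-- Extended-real-valued inverse, with `0⁻¹ = ∞`. -/
def invE (s : ℝ) : EReal := if s = 0 then ⊤ else ((s⁻¹ : ℝ) : EReal)

/-- Affine thickness `τ_A(C)` of `C` with respect to the diagonal matrix with entries `β`,
computed from the enumeration `e` of the bounded gaps of `C`. -/
def thicknessA {n : ℕ} (β : Fin n → ℝ) (C : Set (Fin n → ℝ)) (e : GapEnum β C) : EReal :=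
  if e.J = ∅ then (if (interior C).Nonempty then ⊤ else ⊥)
  else if ∃ k ∈ e.J, gapDist β C e k = 0 then ⊥
  else ⨅ k ∈ e.J, (invE (sizeWrt β (e.G k)) - invE (gapDist β C e k))

/-- Open sets `U`, `V` are linked. -/
def Linked {n : ℕ} (U V : Set (Fin n → ℝ)) : Prop :=
  (U ∩ V).Nonempty ∧ (frontier U \ V).Nonempty ∧ (frontier V \ U).Nonempty

/-- Compact sets `C₁`, `C₂` are BG linked. -/
def BGLinked {n : ℕ} (C₁ C₂ : Set (Fin n → ℝ)) : Prop :=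
  ∀ G₁ G₂, IsBoundedGap C₁ G₁ → IsBoundedGap C₂ G₂ → Linked G₁ G₂ ∨ G₁ ∩ G₂ = ∅

/-- `C₁, C₂ ⊆ B[0,1]` are a strongly refinable pair for the diagonal matrix with entries `β`. -/
def StronglyRefinable {n : ℕ} (β : Fin n → ℝ) (C₁ C₂ : Set (Fin n → ℝ)) : Prop :=
  ∃ C₁' C₂' : Set (Fin n → ℝ), IsCompact C₁' ∧ IsCompact C₂' ∧
    C₁' ⊆ closedBall 0 1 ∧ C₂' ⊆ closedBall 0 1 ∧
    BGLinked C₁' C₂' ∧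
    (∃ G₁, IsBoundedGap C₁' G₁ ∧ ¬ frontier G₁ ⊆ unboundedGap C₂') ∧
    (∃ G₂, IsBoundedGap C₂' G₂ ∧ ¬ frontier G₂ ⊆ unboundedGap C₁') ∧
    (∀ e₁ : GapEnum β C₁, ∀ e₂ : GapEnum β C₂, ∃ e₁' : GapEnum β C₁', ∃ e₂' : GapEnum β C₂',
      thicknessA β C₁ e₁ + thicknessA β C₂ e₂ ≤ thicknessA β C₁' e₁' + thicknessA β C₂' e₂') ∧
    C₁' ∩ C₂' ⊆ C₁ ∩ C₂

/-- The distance between two sets. -/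
def setDist {n : ℕ} (A B : Set (Fin n → ℝ)) : ℝ :=
  sInf {r | ∃ a ∈ A, ∃ b ∈ B, r = dist a b}

/-- An enumeration of the bounded gaps of `C` in non-increasing order of diameter. -/
structure DiamEnum {n : ℕ} (C : Set (Fin n → ℝ)) where
  J : Set ℕ
  G : ℕ → Set (Fin n → ℝ)
  downward : ∀ k l : ℕ, k ≤ l → l ∈ J → k ∈ J
  isGap : ∀ k ∈ J, IsBoundedGap C (G k)
  inj : ∀ k ∈ J, ∀ l ∈ J, G k = G l → k = l
  surj : ∀ G', IsBoundedGap C G' → ∃ k ∈ J, G k = G'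
  anti : ∀ k ∈ J, ∀ l ∈ J, k ≤ l → Metric.diam (G l) ≤ Metric.diam (G k)

/-- The Falconer–Yavicoli thickness `τ(C)`, computed from the enumeration `e` of
the bounded gaps of `C` in non-increasing order of diameter. -/
def FYthickness {n : ℕ} (C : Set (Fin n → ℝ)) (e : DiamEnum C) : ℝ≥0∞ :=
  if e.J = ∅ then (if (interior C).Nonempty then ⊤ else 0)
  else ⨅ k ∈ e.J, ENNReal.ofReal
    (setDist (e.G k) (unboundedGap C ∪ ⋃ j ∈ e.J ∩ Iio k, e.G j) / Metric.diam (e.G k))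

end
noncomputable section
/-- auxiliary -/
def Pt (n : ℕ) (c : ℝ) : Fin n → ℝ := fun j => if (j : ℕ) = 0 then c else 0

def Cst (n : ℕ) (r a b : ℝ) : Set (Fin n → ℝ) :=
  (closedBall (Pt n a) (3/8) \ ball (Pt n a) r) ∪ {Pt n b}

set_option maxHeartbeats 1600000 in
lemma master {n : ℕ} (hn : 2 ≤ n) (β : Fin n → ℝ) (hβ : ∀ j, β j ∈ Set.Ioo (0:ℝ) 1)
    (r s0 g0 tbig : ℝ)
    (hr0 : 0 < r) (hr4 : r ≤ 1/4)
    (hs0 : 0 < s0) (hg0 : 0 < g0)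
    (hsize : ∀ j, r ≤ β j ^ (1/s0))
    (hcross : ∀ t : ℝ, 0 < t → (∃ j, (1:ℝ)/16 < β j ^ (1/t)) → g0 ≤ t)
    (htbig : 0 < tbig) (htbig2 : ∀ j, (1:ℝ)/2 ≤ β j ^ (1/tbig))
    (a b : ℝ) (hab : b = -a) (ha : |a| = 1/2) :
    IsCompact (Cst n r a b) ∧ (Cst n r a b).Nonempty ∧ Cst n r a b ⊆ closedBall 0 1 ∧
    (¬ ∃ G, IsGap (Cst n r a b) G ∧ Cst n r b a ⊆ G) ∧
    ∃ e : GapEnum β (Cst n r a b), ((s0⁻¹ - g0⁻¹ : ℝ) : EReal) ≤ thicknessA β (Cst n r a b) e := by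
  have h0n : 0 < n := by omega
  have h1n : 1 < n := by omega
  set i0 : Fin n := ⟨0, h0n⟩ with hi0
  set i1 : Fin n := ⟨1, h1n⟩ with hi1
  set pa : Fin n → ℝ := Pt n a with hpa
  set pb : Fin n → ℝ := Pt n b with hpb
  have hpa0 : pa i0 = a := by simp [hpa, Pt, hi0]
  have hpb0 : pb i0 = b := by simp [hpb, Pt, hi0]
  have hpaj : ∀ j : Fin n, (j : ℕ) ≠ 0 → pa j = 0 := fun j hj => by simp [hpa, Pt, hj]
  have hpbj : ∀ j : Fin n, (j : ℕ) ≠ 0 → pb j = 0 := fun j hj => by simp [hpb, Pt, hj]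
  have hpa1 : pa i1 = 0 := hpaj i1 (by simp [hi1])
  have hpb1 : pb i1 = 0 := hpbj i1 (by simp [hi1])
  have ha2 : a ≠ 0 := by intro h; rw [h] at ha; norm_num at ha
  -- coordinate distance bound
  have hco : ∀ (x y : Fin n → ℝ) (j : Fin n), |x j - y j| ≤ dist x y := by
    intro x y j; rw [← Real.dist_eq]; exact dist_le_pi_dist x y j
  have hdab : (1:ℝ) ≤ dist pa pb := by
    have h1 := hco pa pb i0
    rw [hpa0, hpb0, hab] at h1
    have h2 : |a - -a| = 1 := by
      have h3 : a - -a = 2*a := by ring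
      rw [h3, abs_mul, ha]; norm_num
    linarith [h2.ge.trans h1]
  set C : Set (Fin n → ℝ) := Cst n r a b with hC
  set Hole : Set (Fin n → ℝ) := ball pa r with hHole
  set Out : Set (Fin n → ℝ) := (closedBall pa (3/8))ᶜ \ {pb} with hOut
  have hmemC : ∀ x, x ∈ C ↔ (r ≤ dist x pa ∧ dist x pa ≤ 3/8) ∨ x = pb := by
    intro x
    simp only [hC, Cst, mem_union, mem_diff, mem_closedBall, mem_ball, not_lt,
      mem_singleton_iff, ← hpa, ← hpb]
    tauto
  have hpbOut : dist pb pa ≥ 1 := by rw [dist_comm]; exact hdab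
  have hcompl : Cᶜ = Hole ∪ Out := by
    ext x
    simp only [mem_compl_iff, hmemC, hHole, hOut, mem_union, mem_ball, mem_diff,
      mem_compl_iff, mem_closedBall, mem_singleton_iff]
    have hxb : x = pb → (1:ℝ) ≤ dist x pa := fun h => h ▸ hpbOut
    constructor
    · intro h
      push_neg at h
      obtain ⟨h1, h2⟩ := h
      rcases lt_or_ge (dist x pa) r with h3 | h3
      · exact Or.inl h3
      · exact Or.inr ⟨not_le.mpr (h1 h3), h2⟩
    · rintro (h | ⟨h1, h2⟩) <;> push_neg
      · refine ⟨fun h1 => absurd h1 (not_le.mpr (by linarith)), fun hx => ?_⟩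
        have := hxb hx; linarith
      · exact ⟨fun _ => not_le.mp h1, h2⟩
  have hHoleSub : Hole ⊆ Cᶜ := by rw [hcompl]; exact subset_union_left
  have hOutSub : Out ⊆ Cᶜ := by rw [hcompl]; exact subset_union_right
  have hdisj : Disjoint Hole Out := by
    rw [Set.disjoint_left]
    intro x hx hx'
    have h1 : dist x pa < r := hx
    have h2 : ¬ dist x pa ≤ 3/8 := hx'.1
    exact h2 (by linarith)
  have hHoleOpen : IsOpen Hole := isOpen_ball
  have hOutOpen : IsOpen Out := by
    rw [hOut, diff_eq]
    exact (isOpen_compl_iff.mpr Metric.isClosed_closedBall).inter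
      (isOpen_compl_iff.mpr isClosed_singleton)
  have hHolePre : IsPreconnected Hole := (convex_ball pa r).isPreconnected
  have hpaHole : pa ∈ Hole := by simp [hHole, mem_ball, hr0]
  -- the connected component of a point of the hole is the hole
  have comp_hole : ∀ x ∈ Hole, connectedComponentIn Cᶜ x = Hole := by
    intro x hx
    apply Subset.antisymm
    · exact IsPreconnected.subset_left_of_subset_union hHoleOpen hOutOpen hdisj
        (by rw [← hcompl]; exact connectedComponentIn_subset _ _)
        ⟨x, mem_connectedComponentIn (hHoleSub hx), hx⟩
        isPreconnected_connectedComponentIn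
    · exact hHolePre.subset_connectedComponentIn hx hHoleSub
  -- points of Out have unbounded component
  have out_unbounded : ∀ x ∈ Out, ¬ Bornology.IsBounded (connectedComponentIn Cᶜ x) := by
    intro x hx hbdd
    obtain ⟨hx38, hxpb⟩ := hx
    rw [mem_compl_iff, mem_closedBall] at hx38
    have hxpb' : x ≠ pb := hxpb
    set σ : ℝ := if 0 ≤ x i1 then 1 else -1 with hσ
    have hσc : (0 ≤ x i1 ∧ σ = 1) ∨ (x i1 < 0 ∧ σ = -1) := by
      rcases le_or_gt 0 (x i1) with h | h
      · exact Or.inl ⟨h, if_pos h⟩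
      · exact Or.inr ⟨h, if_neg (not_le.mpr h)⟩
    set Seg : Set (Fin n → ℝ) := (fun c => Function.update x i1 c) '' uIcc (x i1) (10*σ)
      with hSeg
    set Slab : Set (Fin n → ℝ) := {z | 10 ≤ σ * z i1} with hSlab
    -- facts about c in the interval
    have hcfact : ∀ c ∈ uIcc (x i1) (10*σ), (min |x i1| 10 ≤ |c|) ∧ (c = 0 → x i1 = 0) := by
      intro c hc
      rw [Set.mem_uIcc] at hc
      rcases hσc with ⟨h1, h2⟩ | ⟨h1, h2⟩ <;> rw [h2] at hc <;>
        rcases hc with ⟨hc1, hc2⟩ | ⟨hc1, hc2⟩ <;>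
        constructor <;>
        first
          | (intro h0; rw [h0] at hc1 hc2; linarith)
          | (rw [abs_of_nonneg h1, min_def]
             split <;> rw [abs_of_nonneg (by linarith)] <;> linarith)
          | (rw [abs_of_nonpos h1.le, min_def]
             split <;> rw [abs_of_nonpos (by linarith)] <;> linarith)
          | (exfalso; linarith)
    -- Seg avoids C
    have hSegSub : Seg ⊆ Cᶜ := by
      rintro _ ⟨c, hc, rfl⟩
      obtain ⟨hcabs, hc0⟩ := hcfact c hc
      rw [mem_compl_iff, hmemC]
      push_neg
      constructor
      · -- not in shell: some coordinate far from pa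
        intro _
        -- dist x pa > 3/8 gives a coordinate with big distance
        have hex : ∃ j, ¬ dist (x j) (pa j) ≤ 3/8 := by
          by_contra hall
          push_neg at hall
          exact absurd ((dist_pi_le_iff (by norm_num)).mpr fun j => (hall j)) hx38
        obtain ⟨j, hj⟩ := hex
        rw [Real.dist_eq, not_le] at hj
        rcases eq_or_ne j i1 with rfl | hji
        · -- coordinate i1
          rw [hpa1, sub_zero] at hj
          have h10 : (3:ℝ)/8 < |c| := lt_of_lt_of_le (lt_min hj (by norm_num)) hcabs
          have h11 := hco (Function.update x i1 c) pa i1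
          rw [Function.update_self, hpa1, sub_zero] at h11
          linarith
        · have h11 := hco (Function.update x i1 c) pa j
          rw [Function.update_of_ne hji] at h11
          linarith
      · -- not equal to pb
        intro hEq
        by_cases hc' : c = 0
        · have hx1 : x i1 = 0 := hc0 hc'
          rw [hc', ← hx1, Function.update_eq_self] at hEq
          exact hxpb' hEq
        · have : Function.update x i1 c i1 = pb i1 := by rw [hEq]
          rw [Function.update_self, hpb1] at this
          exact hc' this
    -- Slab avoids C
    have hSlabSub : Slab ⊆ Cᶜ := by
      intro z hz
      have hz10 : (10:ℝ) ≤ σ * z i1 := hz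
      have habs : (10:ℝ) ≤ |z i1| := by
        rcases hσc with ⟨_, h2⟩ | ⟨_, h2⟩ <;> rw [h2] at hz10
        · rw [one_mul] at hz10; exact hz10.trans (le_abs_self _)
        · rw [neg_one_mul] at hz10; exact hz10.trans (neg_le_abs _)
      rw [mem_compl_iff, hmemC]
      push_neg
      constructor
      · intro _
        have h11 := hco z pa i1
        rw [hpa1, sub_zero] at h11
        linarith
      · intro hEq
        rw [hEq, hpb1, abs_zero] at habs; linarith
    -- y is in both
    set y : Fin n → ℝ := Function.update x i1 (10*σ) with hy
    have hySeg : y ∈ Seg := ⟨10*σ, right_mem_uIcc, rfl⟩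
    have hySlab : y ∈ Slab := by
      show (10:ℝ) ≤ σ * y i1
      rw [hy, Function.update_self]
      rcases hσc with ⟨_, h2⟩ | ⟨_, h2⟩ <;> rw [h2] <;> norm_num
    have hcont : Continuous fun c : ℝ => Function.update x i1 c := by
      have := Continuous.update (f := fun c : ℝ => x) (A := fun _ : Fin n => ℝ)
        continuous_const i1 (g := fun c : ℝ => c) continuous_id
      exact this
    have hSegPre : IsPreconnected Seg :=
      isPreconnected_uIcc.image _ hcont.continuousOn
    have hSlabPre : IsPreconnected Slab := by
      apply Convex.isPreconnected
      intro z hz w hw s t hs ht hst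
      have hz' : (10:ℝ) ≤ σ * z i1 := hz
      have hw' : (10:ℝ) ≤ σ * w i1 := hw
      show (10:ℝ) ≤ σ * (s • z + t • w) i1
      have : (s • z + t • w) i1 = s * z i1 + t * w i1 := rfl
      rw [this]
      nlinarith [mul_le_mul_of_nonneg_left hz' hs, mul_le_mul_of_nonneg_left hw' ht]
    have hKpre : IsPreconnected (Seg ∪ Slab) :=
      IsPreconnected.union y hySeg hySlab hSegPre hSlabPre
    have hKsub : Seg ∪ Slab ⊆ Cᶜ := union_subset hSegSub hSlabSub
    have hxK : x ∈ Seg ∪ Slab :=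
      Or.inl ⟨x i1, left_mem_uIcc, Function.update_eq_self i1 x⟩
    have hKcomp : Seg ∪ Slab ⊆ connectedComponentIn Cᶜ x :=
      hKpre.subset_connectedComponentIn hxK hKsub
    -- Slab is unbounded
    obtain ⟨R, hR⟩ := isBounded_iff_forall_norm_le.mp
      (hbdd.subset ((subset_union_right).trans hKcomp))
    set z : Fin n → ℝ := fun j => if j = i1 then σ * (|R| + 11) else 0 with hz
    have hzSlab : z ∈ Slab := by
      show (10:ℝ) ≤ σ * z i1
      have : z i1 = σ * (|R| + 11) := by simp [hz]
      rw [this]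
      rcases hσc with ⟨_, h2⟩ | ⟨_, h2⟩ <;> rw [h2] <;> nlinarith [abs_nonneg R]
    have := hR z hzSlab
    have hz1 : |z i1| = |R| + 11 := by
      have : z i1 = σ * (|R| + 11) := by simp [hz]
      rw [this, abs_mul]
      rcases hσc with ⟨_, h2⟩ | ⟨_, h2⟩ <;> rw [h2] <;>
        simp [abs_of_nonneg (by positivity : (0:ℝ) ≤ |R| + 11)]
    have hzn : |z i1| ≤ ‖z‖ := by
      have := norm_le_pi_norm z i1
      rwa [Real.norm_eq_abs] at this
    have := le_abs_self R
    linarith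
  -- membership helpers for unboundedGap
  have hUGmem : ∀ x ∈ Out, x ∈ unboundedGap C := fun x hx => ⟨hOutSub hx, out_unbounded x hx⟩
  have hUGfar : ∀ x ∈ unboundedGap C, ¬ dist x pa ≤ 3/8 := by
    intro x hx
    obtain ⟨hxc, hxu⟩ := hx
    rcases (hcompl ▸ hxc : x ∈ Hole ∪ Out) with h | h
    · exact absurd (by rw [comp_hole x h]; exact isBounded_ball) hxu
    · exact h.1
  have hHoleGap : IsBoundedGap C Hole :=
    ⟨⟨pa, hHoleSub hpaHole, (comp_hole pa hpaHole).symm⟩, isBounded_ball⟩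
  have hcomp : IsCompact C := by
    apply IsCompact.union
    · apply isCompact_of_isClosed_isBounded (Metric.isClosed_closedBall.sdiff isOpen_ball)
      exact (isBounded_closedBall).subset diff_subset
    · exact isCompact_singleton
  have hCne : C.Nonempty := ⟨pb, Or.inr rfl⟩
  have hb2 : |b| = 1/2 := by rw [hab, abs_neg, ha]
  have hnorm : ∀ (c : ℝ), |c| = 1/2 → dist (Pt n c) (0 : Fin n → ℝ) ≤ 1/2 := by
    intro c hc
    rw [dist_pi_le_iff (by norm_num)]
    intro j
    rcases eq_or_ne ((j:ℕ)) 0 with hj | hj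
    · simp only [Pt, hj, if_pos, Pi.zero_apply, Real.dist_eq, sub_zero]
      exact hc.le
    · simp [Pt, hj]
  have hsub1 : C ⊆ closedBall 0 1 := by
    intro x hx
    rw [mem_closedBall]
    rcases (hmemC x).mp hx with ⟨_, h2⟩ | h
    · calc dist x 0 ≤ dist x pa + dist pa 0 := dist_triangle _ _ _
        _ ≤ 3/8 + 1/2 := add_le_add h2 (hnorm a ha)
        _ ≤ 1 := by norm_num
    · rw [h]; exact le_trans (hnorm b hb2) (by norm_num)
  -- gap non-containment
  have hnogap : ¬ ∃ G, IsGap C G ∧ Cst n r b a ⊆ G := by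
    rintro ⟨G, ⟨x, hxc, rfl⟩, hsub⟩
    have hpaC' : pa ∈ Cst n r b a := Or.inr rfl
    have hpaG := hsub hpaC'
    have hG : connectedComponentIn Cᶜ x = Hole := by
      rw [connectedComponentIn_eq hpaG, comp_hole pa hpaHole]
    set y : Fin n → ℝ := Function.update (Pt n b) i0 (b + 1/4) with hy
    have hyd : ∀ j : Fin n, dist (y j) (Pt n b j) ≤ 1/4 := by
      intro j
      rcases eq_or_ne j i0 with rfl | hj
      · rw [hy, Function.update_self, Real.dist_eq, ← hpb, hpb0,
          show b + 1/4 - b = 1/4 by ring, abs_of_nonneg (by norm_num : (0:ℝ) ≤ 1/4)]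
      · rw [hy, Function.update_of_ne hj, Real.dist_eq, sub_self, abs_zero]; norm_num
    have hyC' : y ∈ Cst n r b a := by
      left
      refine ⟨?_, ?_⟩
      · rw [mem_closedBall, dist_pi_le_iff (by norm_num)]
        intro j
        exact le_trans (hyd j) (by norm_num)
      · rw [mem_ball, not_lt]
        have h1 := hco y (Pt n b) i0
        rw [hy, Function.update_self, ← hpb, hpb0] at h1
        have h2 : |b + 1/4 - b| = 1/4 := by norm_num
        rw [← hpb]
        linarith
    have hyG := hsub hyC'
    rw [hG] at hyG
    have h1 : dist y pa < r := hyG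
    have h2 := hco y pa i0
    have h4 : y i0 = b + 1/4 := by rw [hy, Function.update_self]
    have h5 : (3:ℝ)/4 ≤ |y i0 - pa i0| := by
      rw [h4, hpa0, hab, le_abs]
      rcases (abs_eq (by norm_num : (0:ℝ) ≤ 1/2)).mp ha with h | h
      · right; rw [h]; norm_num
      · left; rw [h]; norm_num
    have h6 : (3:ℝ)/4 ≤ dist y pa := le_trans h5 h2
    have h7 : r ≤ dist y pa := le_trans (hr4.trans (by norm_num)) h6
    exact absurd h1 (not_lt.mpr h7)
  -- the gap enumeration
  have hsurjHole : ∀ G', IsBoundedGap C G' → G' = Hole := by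
    rintro G' ⟨⟨x, hxc, rfl⟩, hbd⟩
    rcases (hcompl ▸ hxc : x ∈ Hole ∪ Out) with h | h
    · exact comp_hole x h
    · exact absurd hbd (out_unbounded x h)
  set Gfun : ℕ → Set (Fin n → ℝ) := fun k => if k = 0 then Hole else ∅ with hGfun
  let e : GapEnum β C :=
    { J := {0}
      G := Gfun
      downward := by intro k l hkl hl; rw [mem_singleton_iff] at hl ⊢; omega
      isGap := by
        intro k hk
        simp only [mem_singleton_iff] at hk
        subst hk
        simpa [hGfun] using hHoleGap
      inj := by intro k hk l hl _; simp only [mem_singleton_iff] at hk hl; omega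
      surj := by
        intro G' hG'
        exact ⟨0, rfl, by simp only [hGfun, if_pos]; exact (hsurjHole G' hG').symm⟩
      anti := by
        intro k hk l hl _
        simp only [mem_singleton_iff] at hk hl
        subst hk; subst hl
        exact le_rfl }
  have hJ : e.J = {0} := rfl
  have hG0 : e.G 0 = Hole := by
    show (if (0:ℕ) = 0 then Hole else ∅) = Hole
    simp
  -- simplify the gap-distance set
  have hgd : gapDist β C e 0 = sInf {t | 0 < t ∧ ∃ z, (affBox β (1/t) z ∩ Hole).Nonempty ∧
      (affBox β (1/t) z ∩ unboundedGap C).Nonempty} := by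
    unfold gapDist
    congr 1
    ext t
    have h2 : e.J ∩ Iio (0:ℕ) = ∅ := by ext i; simp
    rw [hG0, h2]
    simp
  have hrpow_nn : ∀ (j : Fin n) (q : ℝ), (0:ℝ) ≤ β j ^ q := fun j q =>
    Real.rpow_nonneg (hβ j).1.le q
  have hg_ge : g0 ≤ gapDist β C e 0 := by
    rw [hgd]
    apply le_csInf
    · refine ⟨tbig, htbig, pa, ⟨pa, ?_, hpaHole⟩, ?_⟩
      · intro j
        rw [sub_self, abs_zero]
        exact hrpow_nn j _
      · set b0 : Fin n → ℝ := Function.update pa i0 (2*a) with hb0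
        have h2a : |2*a - a| = 1/2 := by rw [show 2*a - a = a by ring, ha]
        refine ⟨b0, ?_, hUGmem b0 ⟨?_, ?_⟩⟩
        · intro j
          rcases eq_or_ne j i0 with rfl | hj
          · rw [hb0, Function.update_self, hpa0, h2a]
            exact htbig2 i0
          · rw [hb0, Function.update_of_ne hj, sub_self, abs_zero]
            exact hrpow_nn j _
        · rw [mem_compl_iff, mem_closedBall]
          intro hle
          have h1 := hco b0 pa i0
          rw [hb0, Function.update_self, hpa0, h2a] at h1
          linarith
        · simp only [mem_singleton_iff]
          intro hEq
          have h1 : b0 i0 = pb i0 := by rw [hEq]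
          rw [hb0, Function.update_self, hpb0, hab] at h1
          exact ha2 (by linarith)
    · rintro t ⟨ht0, z, ⟨u, hu_box, hu_hole⟩, ⟨v, hv_box, hv_ug⟩⟩
      have hv_far : ¬ dist v pa ≤ 3/8 := hUGfar v hv_ug
      have hu_near : dist u pa < r := hu_hole
      rw [not_le] at hv_far
      have huv : 1/8 < dist u v := by
        have h1 := dist_triangle v u pa
        rw [dist_comm v u] at h1
        linarith
      have hex : ∃ j, ¬ dist (u j) (v j) ≤ 1/8 := by
        by_contra hall
        push_neg at hall
        exact absurd ((dist_pi_le_iff (by norm_num)).mpr hall) (not_le.mpr huv)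
      obtain ⟨j, hj⟩ := hex
      rw [Real.dist_eq, not_le] at hj
      have h1 := hu_box j
      have h2 := hv_box j
      apply hcross t ht0
      refine ⟨j, ?_⟩
      have h3 : |u j - v j| ≤ |u j - z j| + |z j - v j| := abs_sub_le _ _ _
      have h4 : |z j - v j| = |v j - z j| := abs_sub_comm _ _
      linarith
  have hg_pos : 0 < gapDist β C e 0 := lt_of_lt_of_le hg0 hg_ge
  have hs_le : sizeWrt β Hole ≤ s0 := by
    apply csInf_le ⟨0, fun t ht => ht.1.le⟩
    refine ⟨hs0, pa, ?_⟩
    intro x hx j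
    have h1 := hco x pa j
    have h2 : dist x pa < r := hx
    exact le_trans (by linarith) (hsize j)
  have hs_nonneg : 0 ≤ sizeWrt β Hole := Real.sInf_nonneg (fun t ht => ht.1.le)
  refine ⟨hcomp, hCne, hsub1, hnogap, e, ?_⟩
  have hJne : e.J ≠ ∅ := by rw [hJ]; exact singleton_ne_empty 0
  have hgd0 : ¬ ∃ k ∈ e.J, gapDist β C e k = 0 := by
    rintro ⟨k, hk, hk0⟩
    rw [hJ, mem_singleton_iff] at hk
    subst hk
    linarith
  rw [thicknessA, if_neg hJne, if_neg hgd0, hJ, iInf_singleton, hG0]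
  have hinvg : invE (gapDist β C e 0) ≤ ((g0⁻¹ : ℝ) : EReal) := by
    rw [invE, if_neg (ne_of_gt hg_pos)]
    exact EReal.coe_le_coe_iff.mpr (inv_anti₀ hg0 hg_ge)
  have hinvs : ((s0⁻¹ : ℝ) : EReal) ≤ invE (sizeWrt β Hole) := by
    rw [invE]
    split
    · exact le_top
    · next hne0 =>
      have hspos : 0 < sizeWrt β Hole := lt_of_le_of_ne hs_nonneg (Ne.symm hne0)
      exact EReal.coe_le_coe_iff.mpr (inv_anti₀ hspos hs_le)
  rw [EReal.coe_sub]
  exact EReal.sub_le_sub hinvs hinvg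
end

set_option maxHeartbeats 1600000 in
/-- counterexample sets with large affine thickness but empty intersection. -/
theorem affine_thickness_counterexample (n : ℕ) (hn : 2 ≤ n)
    (β : Fin n → ℝ) (hβ : ∀ j, β j ∈ Set.Ioo (0 : ℝ) 1) :
    ∃ C₁ C₂ : Set (Fin n → ℝ),
      IsCompact C₁ ∧ IsCompact C₂ ∧ C₁.Nonempty ∧ C₂.Nonempty ∧
      C₁ ⊆ closedBall 0 1 ∧ C₂ ⊆ closedBall 0 1 ∧
      (¬ ∃ G, IsGap C₂ G ∧ C₁ ⊆ G) ∧ (¬ ∃ G, IsGap C₁ G ∧ C₂ ⊆ G) ∧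
      (∃ e₁ : GapEnum β C₁, ∃ e₂ : GapEnum β C₂,
        0 < thicknessA β C₁ e₁ + thicknessA β C₂ e₂) ∧
      C₁ ∩ C₂ = ∅ := by
  have h0n : 0 < n := by omega
  have hne : (Finset.univ : Finset (Fin n)).Nonempty := ⟨⟨0, h0n⟩, Finset.mem_univ _⟩
  set M : ℝ := Finset.univ.sup' hne (fun j => -Real.log (β j)) with hMdef
  set L : ℝ := Finset.univ.inf' hne (fun j => -Real.log (β j)) with hLdef
  have hMle : ∀ j, -Real.log (β j) ≤ M := by
    intro j; rw [hMdef]; exact Finset.le_sup' (fun j => -Real.log (β j)) (Finset.mem_univ j)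
  have hLle : ∀ j, L ≤ -Real.log (β j) := by
    intro j; rw [hLdef]; exact Finset.inf'_le (fun j => -Real.log (β j)) (Finset.mem_univ j)
  have hLpos : 0 < L := by
    obtain ⟨j, _, hj⟩ := Finset.exists_mem_eq_inf' hne (fun j => -Real.log (β j))
    rw [hLdef, hj]
    have := Real.log_neg (hβ j).1 (hβ j).2
    linarith
  have hML : L ≤ M := le_trans (hLle ⟨0, h0n⟩) (hMle ⟨0, h0n⟩)
  have hMpos : 0 < M := lt_of_lt_of_le hLpos hML
  have hl2 : 0 < Real.log 2 := Real.log_pos one_lt_two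
  set s0 : ℝ := L / (8 * Real.log 2) with hs0def
  set g0 : ℝ := L / (4 * Real.log 2) with hg0def
  set tbig : ℝ := M / Real.log 2 with htbigdef
  set r : ℝ := Real.exp (-(M / s0)) with hrdef
  have hs0 : 0 < s0 := div_pos hLpos (by positivity)
  have hg0 : 0 < g0 := div_pos hLpos (by positivity)
  have hs0g0 : s0 < g0 := by
    rw [hs0def, hg0def]
    exact div_lt_div_of_pos_left hLpos (by positivity) (by nlinarith)
  have htbigpos : 0 < tbig := div_pos hMpos hl2
  have hr0 : 0 < r := Real.exp_pos _
  have hrpow : ∀ (j : Fin n) (t : ℝ), β j ^ (1/t) = Real.exp (Real.log (β j) * (1/t)) :=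
    fun j t => Real.rpow_def_of_pos (hβ j).1 _
  have hsize : ∀ j, r ≤ β j ^ (1/s0) := by
    intro j
    rw [hrpow, hrdef]
    apply Real.exp_le_exp.mpr
    have h1 : -M ≤ Real.log (β j) := by linarith [hMle j]
    have h2 : Real.log (β j) * (1/s0) = Real.log (β j) / s0 := by ring
    have h3 : -(M/s0) = (-M)/s0 := by ring
    rw [h2, h3]
    exact (div_le_div_iff_of_pos_right hs0).mpr h1
  have hr4 : r ≤ 1/4 := by
    rw [hrdef]
    have h4 : Real.exp (-(2*Real.log 2)) = 1/4 := by
      rw [Real.exp_neg]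
      have h5 : Real.exp (2*Real.log 2) = 4 := by
        rw [two_mul, Real.exp_add, Real.exp_log two_pos]; norm_num
      rw [h5]; norm_num
    rw [← h4]
    apply Real.exp_le_exp.mpr
    rw [neg_le_neg_iff]
    have h5 : M / s0 = M * (8*Real.log 2) / L := by
      rw [hs0def]; field_simp
    have h6 : 2*Real.log 2 ≤ M * (8*Real.log 2) / L := by
      rw [le_div_iff₀ hLpos]
      nlinarith
    rw [h5]; exact h6
  have hcross : ∀ t : ℝ, 0 < t → (∃ j, (1:ℝ)/16 < β j ^ (1/t)) → g0 ≤ t := by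
    rintro t ht ⟨j, hj⟩
    rw [hrpow] at hj
    have h1 : Real.log (1/16) < Real.log (β j) * (1/t) := by
      have := Real.log_lt_log (by norm_num : (0:ℝ) < 1/16) hj
      rwa [Real.log_exp] at this
    have h16 : Real.log (1/16 : ℝ) = -(4*Real.log 2) := by
      rw [one_div, Real.log_inv, show (16:ℝ) = 2^(4:ℕ) by norm_num, Real.log_pow]
      push_cast; ring
    have h2 : Real.log (β j) * (1/t) ≤ (-L) * (1/t) :=
      mul_le_mul_of_nonneg_right (by linarith [hLle j]) (by positivity)
    have h5 : L/t < 4*Real.log 2 := by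
      have h3 : -(4*Real.log 2) < (-L) * (1/t) := by rw [h16] at h1; linarith
      have h4 : (-L) * (1/t) = -(L/t) := by ring
      rw [h4] at h3
      linarith
    have h6 : L < 4*Real.log 2 * t := by
      calc L = L/t * t := by field_simp
        _ < 4*Real.log 2 * t := mul_lt_mul_of_pos_right h5 ht
    rw [hg0def, div_le_iff₀ (by positivity)]
    linarith
  have htbig2 : ∀ j, (1:ℝ)/2 ≤ β j ^ (1/tbig) := by
    intro j
    rw [hrpow]
    have h1 : Real.exp (-(Real.log 2)) = 1/2 := by
      rw [Real.exp_neg, Real.exp_log two_pos]; norm_num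
    rw [← h1]
    apply Real.exp_le_exp.mpr
    have h2 : Real.log (β j) * (1/tbig) = Real.log (β j) / tbig := by ring
    have h3 : (-M)/tbig ≤ Real.log (β j)/tbig :=
      (div_le_div_iff_of_pos_right htbigpos).mpr (by linarith [hMle j])
    have h4 : (-M)/tbig = -(Real.log 2) := by
      rw [htbigdef]; field_simp
    rw [h2, ← h4]
    exact h3
  obtain ⟨hc1, hn1, hb1, hg1, e1, ht1⟩ := master hn β hβ r s0 g0 tbig hr0 hr4 hs0 hg0
    hsize hcross htbigpos htbig2 (1/2) (-(1/2)) (by norm_num) (by norm_num)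
  obtain ⟨hc2, hn2, hb2, hg2, e2, ht2⟩ := master hn β hβ r s0 g0 tbig hr0 hr4 hs0 hg0
    hsize hcross htbigpos htbig2 (-(1/2)) (1/2) (by norm_num) (by norm_num)
  have hdisj : Cst n r (1/2) (-(1/2)) ∩ Cst n r (-(1/2)) (1/2) = ∅ := by
    rw [Set.eq_empty_iff_forall_notMem]
    rintro x ⟨hx1, hx2⟩
    set i0 : Fin n := ⟨0, h0n⟩ with hi0
    have hA : Pt n (1/2 : ℝ) i0 = 1/2 := by simp [Pt, hi0]
    have hB : Pt n (-(1/2) : ℝ) i0 = -(1/2) := by simp [Pt, hi0]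
    have hco : ∀ (u v : Fin n → ℝ), |u i0 - v i0| ≤ dist u v := fun u v => by
      rw [← Real.dist_eq]; exact dist_le_pi_dist u v i0
    have hAB : (1:ℝ) ≤ dist (Pt n (1/2:ℝ)) (Pt n (-(1/2):ℝ)) := by
      have h1 := hco (Pt n (1/2:ℝ)) (Pt n (-(1/2):ℝ))
      rw [hA, hB, show (1/2 : ℝ) - (-(1/2)) = 1 by norm_num, abs_one] at h1
      exact h1
    rcases hx1 with h1 | h1 <;> rcases hx2 with h2 | h2
    · have d1 : dist x (Pt n (1/2:ℝ)) ≤ 3/8 := h1.1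
      have d2 : dist x (Pt n (-(1/2):ℝ)) ≤ 3/8 := h2.1
      have h3 := dist_triangle (Pt n (1/2:ℝ)) x (Pt n (-(1/2):ℝ))
      rw [dist_comm (Pt n (1/2:ℝ)) x] at h3
      linarith
    · have hx : x = Pt n (1/2:ℝ) := h2
      have h3 : ¬ dist x (Pt n (1/2:ℝ)) < r := h1.2
      rw [hx, dist_self] at h3
      exact h3 hr0
    · have hx : x = Pt n (-(1/2):ℝ) := h1
      have h3 : ¬ dist x (Pt n (-(1/2):ℝ)) < r := h2.2
      rw [hx, dist_self] at h3
      exact h3 hr0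
    · have hx : x = Pt n (-(1/2):ℝ) := h1
      have hy : x = Pt n (1/2:ℝ) := h2
      have h3 := congrFun (hx.symm.trans hy) i0
      rw [hA, hB] at h3
      norm_num at h3
  refine ⟨Cst n r (1/2) (-(1/2)), Cst n r (-(1/2)) (1/2), hc1, hc2, hn1, hn2, hb1, hb2,
    hg2, hg1, ⟨e1, e2, ?_⟩, hdisj⟩
  have hd : (0:ℝ) < s0⁻¹ - g0⁻¹ := by
    have h1 := one_div_lt_one_div_of_lt hs0 hs0g0
    rw [one_div, one_div] at h1
    linarith
  have hsum := add_le_add ht1 ht2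
  have hpos : (0:EReal) < ((s0⁻¹ - g0⁻¹ : ℝ) : EReal) + ((s0⁻¹ - g0⁻¹ : ℝ) : EReal) := by
    rw [← EReal.coe_add]
    exact EReal.coe_pos.mpr (by linarith)
  exact lt_of_lt_of_le hpos hsum
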